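/- arXiv:1501.04758 — 3 statements merged into one kernel-verified Lean document; each statement's English description precedes it below -/
import Mathlib

section
/- Let S = (S_t)_{t≥0} be a subordinator with Laplace exponent φ, i.e., E[e^{-λ S_t}] = e^{-t φ(λ)}, and suppose φ(λ) ≥ C λ^{α/2} for all λ ≥ 1, for some α ∈ (0,2) and C > 0. Then for every p ∈ (0,1) there is a constant C' (which can be chosen uniformly in p on compact subsets of (0,1)) such that E[S_t^{-p}] ≤ C' t^{-2p/α} for all t ∈ (0,1]. -/
open MeasureTheory Set

section AuxStmt7
open Real

lemma aux_integrableOn {q β b : ℝ} (hq : -1 < q) (hβ : 0 < β) (hb : 0 < b) :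
    IntegrableOn (fun x : ℝ => x ^ q * Real.exp (-b * x ^ β)) (Ioi 0) := by
  have hint : IntegrableOn (fun y : ℝ => y ^ ((q + 1 - β)/β) * Real.exp (-b * y)) (Ioi 0) := by
    have := integrableOn_rpow_mul_exp_neg_mul_rpow (s := (q + 1 - β)/β) (p := 1)
      (by have : 0 < (q+1)/β := div_pos (by linarith) hβ
          have : (q + 1 - β)/β = (q+1)/β - 1 := by field_simp
          linarith) one_pos hb
    simpa [Real.rpow_one] using this
  have h := (integrableOn_Ioi_comp_rpow_iff'
      (fun y : ℝ => y ^ ((q + 1 - β)/β) * Real.exp (-b * y)) hβ.ne').mpr hint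
  refine h.congr_fun (fun x hx => ?_) measurableSet_Ioi
  have hx0 : (0:ℝ) < x := hx
  have h1 : (x ^ β) ^ ((q + 1 - β)/β) = x ^ (q + 1 - β) := by
    rw [← Real.rpow_mul hx0.le, mul_div_cancel₀ _ hβ.ne']
  dsimp only
  rw [smul_eq_mul, h1, ← mul_assoc, ← Real.rpow_add hx0]
  ring_nf

lemma aux_lint {p x : ℝ} (hp : 0 < p) (hx : 0 < x) :
    ∫⁻ l in Ioi (0:ℝ), ENNReal.ofReal (l ^ (p-1) * Real.exp (-(l * x)))
      = ENNReal.ofReal (Real.Gamma p * x ^ (-p)) := by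
  rw [← MeasureTheory.ofReal_integral_eq_lintegral_ofReal]
  · congr 1
    have h := Real.integral_rpow_mul_exp_neg_mul_Ioi hp hx
    have h2 : ∀ l : ℝ, l ^ (p-1) * Real.exp (-(l * x)) = l ^ (p-1) * Real.exp (-(x * l)) := by
      intro l; rw [mul_comm l x]
    simp_rw [h2, h]
    rw [one_div, ← Real.rpow_neg_one, ← Real.rpow_mul hx.le]
    ring_nf
  · have := aux_integrableOn (q := p - 1) (β := 1) (b := x) (by linarith) one_pos hx
    refine this.congr_fun (fun l hl => ?_) measurableSet_Ioi
    dsimp only; rw [Real.rpow_one]; ring_nf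
  · filter_upwards [self_mem_ae_restrict measurableSet_Ioi] with l hl
    have : (0:ℝ) < l := hl
    positivity

lemma aux_key {Ω : Type*} [MeasurableSpace Ω] (P : Measure Ω) [IsProbabilityMeasure P]
    (S : Ω → ℝ) (hS : Measurable S) (hpos : ∀ᵐ ω ∂P, 0 < S ω)
    {p : ℝ} (hp : 0 < p) (v : ℝ → ℝ)
    (hv : ∀ lam, 0 ≤ lam → ∫ ω, Real.exp (-(lam * S ω)) ∂P = v lam) :
    ENNReal.ofReal (Real.Gamma p) * ∫⁻ ω, ENNReal.ofReal ((S ω) ^ (-p)) ∂P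
      = ∫⁻ l in Ioi (0:ℝ), ENNReal.ofReal (l ^ (p-1) * v l) := by
  have hexp_int : ∀ lam : ℝ, 0 ≤ lam → Integrable (fun ω => Real.exp (-(lam * S ω))) P := by
    intro lam hlam
    refine (integrable_const (1:ℝ)).mono' ?_ ?_
    · exact ((measurable_const.mul hS).neg.exp).aestronglyMeasurable
    · filter_upwards [hpos] with ω hω
      rw [Real.norm_eq_abs, abs_of_nonneg (Real.exp_nonneg _)]
      exact Real.exp_le_one_iff.mpr (by nlinarith)
  have hEQ : ∀ lam : ℝ, 0 ≤ lam →
      ∫⁻ ω, ENNReal.ofReal (Real.exp (-(lam * S ω))) ∂P = ENNReal.ofReal (v lam) := by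
    intro lam hlam
    rw [← hv lam hlam, ← MeasureTheory.ofReal_integral_eq_lintegral_ofReal (hexp_int lam hlam)]
    exact Filter.Eventually.of_forall fun ω => Real.exp_nonneg _
  have hmeas : AEMeasurable
      (Function.uncurry fun (ω : Ω) (l : ℝ) => ENNReal.ofReal (l ^ (p-1) * Real.exp (-(l * S ω))))
      (P.prod ((volume : Measure ℝ).restrict (Ioi 0))) := by
    apply Measurable.aemeasurable
    have : Measurable fun z : Ω × ℝ => z.2 ^ (p-1) * Real.exp (-(z.2 * S z.1)) := by fun_prop
    exact this.ennreal_ofReal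
  calc ENNReal.ofReal (Real.Gamma p) * ∫⁻ ω, ENNReal.ofReal ((S ω) ^ (-p)) ∂P
      = ∫⁻ ω, ENNReal.ofReal (Real.Gamma p * (S ω) ^ (-p)) ∂P := by
        rw [← lintegral_const_mul' _ _ ENNReal.ofReal_ne_top]
        refine lintegral_congr fun ω => ?_
        rw [ENNReal.ofReal_mul (Real.Gamma_nonneg_of_nonneg hp.le)]
    _ = ∫⁻ ω, (∫⁻ l in Ioi (0:ℝ), ENNReal.ofReal (l ^ (p-1) * Real.exp (-(l * S ω)))) ∂P := by
        refine lintegral_congr_ae ?_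
        filter_upwards [hpos] with ω hω
        rw [aux_lint hp hω]
    _ = ∫⁻ l in Ioi (0:ℝ), (∫⁻ ω, ENNReal.ofReal (l ^ (p-1) * Real.exp (-(l * S ω))) ∂P) := by
        exact lintegral_lintegral_swap hmeas
    _ = ∫⁻ l in Ioi (0:ℝ), ENNReal.ofReal (l ^ (p-1) * v l) := by
        refine lintegral_congr_ae ?_
        filter_upwards [self_mem_ae_restrict measurableSet_Ioi] with l hl
        have hl0 : (0:ℝ) < l := hl
        have hrn : (0:ℝ) ≤ l ^ (p-1) := Real.rpow_nonneg hl0.le _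
        calc ∫⁻ ω, ENNReal.ofReal (l ^ (p-1) * Real.exp (-(l * S ω))) ∂P
            = ∫⁻ ω, ENNReal.ofReal (l ^ (p-1)) * ENNReal.ofReal (Real.exp (-(l * S ω))) ∂P := by
              refine lintegral_congr fun ω => ENNReal.ofReal_mul hrn
          _ = ENNReal.ofReal (l ^ (p-1)) * ∫⁻ ω, ENNReal.ofReal (Real.exp (-(l * S ω))) ∂P :=
              lintegral_const_mul' _ _ ENNReal.ofReal_ne_top
          _ = ENNReal.ofReal (l ^ (p-1)) * ENNReal.ofReal (v l) := by rw [hEQ l hl0.le]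
          _ = ENNReal.ofReal (l ^ (p-1) * v l) := (ENNReal.ofReal_mul hrn).symm
end AuxStmt7

set_option maxHeartbeats 1000000 in
/-- Estimate (4.4): if `S` is a subordinator with Laplace exponent `φ` satisfying
`φ(λ) ≥ C λ^{α/2}` for `λ ≥ 1`, `α ∈ (0,2)`, then for every `p ∈ (0,1)` (uniformly in
`p` on compact subsets `[a,b] ⊂ (0,1)`) there is `C' > 0` with
`E[S_t^{-p}] ≤ C' t^{-2p/α}` for all `t ∈ (0,1]`. -/
theorem stmt7 {Ω : Type*} [MeasurableSpace Ω] (P : Measure Ω) [IsProbabilityMeasure P]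
    (S : ℝ → Ω → ℝ) (hS : ∀ t, Measurable (S t))
    (hpos : ∀ t, 0 < t → ∀ᵐ ω ∂P, 0 < S t ω)
    (φ : ℝ → ℝ) (α C : ℝ) (hα : α ∈ Ioo (0:ℝ) 2) (hC : 0 < C)
    (hlap : ∀ t, 0 ≤ t → ∀ lam, 0 ≤ lam →
      ∫ ω, Real.exp (-lam * S t ω) ∂P = Real.exp (-t * φ lam))
    (hφ : ∀ lam, 1 ≤ lam → C * lam ^ (α / 2) ≤ φ lam)
    (hφ0 : ∀ lam, 0 ≤ lam → 0 ≤ φ lam) :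
    ∀ a b : ℝ, 0 < a → a ≤ b → b < 1 →
      ∃ C' > (0:ℝ), ∀ p ∈ Icc a b, ∀ t ∈ Ioc (0:ℝ) 1,
        ∫⁻ ω, ENNReal.ofReal ((S t ω) ^ (-p)) ∂P
          ≤ ENNReal.ofReal (C' * t ^ (-(2 * p) / α)) := by
  intro a b ha hab hb1
  obtain ⟨hα0, hα2⟩ := hα
  have contΓ : ∀ {u w : ℝ}, 0 < u → ContinuousOn Real.Gamma (Icc u w) := by
    intro u w hu s hs
    have hs0 : 0 < s := lt_of_lt_of_le hu hs.1
    have hne : ∀ m : ℕ, s ≠ -(m:ℝ) := by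
      intro m h
      have : (0:ℝ) < -(m:ℝ) := h ▸ hs0
      have : (0:ℝ) ≤ (m:ℝ) := Nat.cast_nonneg m
      linarith
    exact (Real.differentiableAt_Gamma hne).continuousAt.continuousWithinAt
  -- minimum of Gamma on [a,b]
  obtain ⟨pm, hpm, hmin⟩ := isCompact_Icc.exists_isMinOn (nonempty_Icc.mpr hab) (contΓ ha)
  set m := Real.Gamma pm with hm_def
  have hm : 0 < m := Real.Gamma_pos_of_pos (lt_of_lt_of_le ha hpm.1)
  have hmle : ∀ p ∈ Icc a b, m ≤ Real.Gamma p := fun p hp => hmin hp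
  -- maximum of Gamma on [2a/α, 2b/α]
  have h2a : 0 < 2*a/α := by positivity
  obtain ⟨pM, hpM, hmax⟩ := isCompact_Icc.exists_isMaxOn (α := ℝ)
    (nonempty_Icc.mpr (((div_le_div_iff_of_pos_right hα0).mpr (by linarith)) : 2*a/α ≤ 2*b/α)) (contΓ h2a)
  set M := Real.Gamma pM with hM_def
  have hM : 0 < M := Real.Gamma_pos_of_pos (lt_of_lt_of_le h2a hpM.1)
  have hMle : ∀ x ∈ Icc (2*a/α) (2*b/α), Real.Gamma x ≤ M := fun x hx => hmax hx
  -- bound on C powers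
  set M2 := max (C ^ (-(2*a)/α)) (C ^ (-(2*b)/α)) with hM2_def
  have hM2 : 0 < M2 := lt_max_of_lt_left (Real.rpow_pos_of_pos hC _)
  have hM2le : ∀ p ∈ Icc a b, C ^ (-(2*p)/α) ≤ M2 := by
    intro p hp
    rcases le_total 1 C with h1C | h1C
    · refine le_trans (le_trans ?_ (le_refl (C ^ (-(2*a)/α)))) (le_max_left _ _)
      exact Real.rpow_le_rpow_of_exponent_le h1C
        (((div_le_div_iff_of_pos_right hα0).mpr (by linarith [hp.1])) : -(2*p)/α ≤ -(2*a)/α)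
    · refine le_trans ?_ (le_max_right _ _)
      exact Real.rpow_le_rpow_of_exponent_ge hC h1C
        (((div_le_div_iff_of_pos_right hα0).mpr (by linarith [hp.2])) : -(2*b)/α ≤ -(2*p)/α)
  refine ⟨(1/m) * (1/a + M2 * (2/α) * M), by positivity, ?_⟩
  set C' := (1/m) * (1/a + M2 * (2/α) * M) with hC'_def
  intro p hp t ht
  obtain ⟨hpa, hpb⟩ := hp
  obtain ⟨ht0, ht1⟩ := ht
  have hp0 : 0 < p := lt_of_lt_of_le ha hpa
  have hp1 : p < 1 := lt_of_le_of_lt hpb hb1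
  -- the key identity
  set v : ℝ → ℝ := fun lam => Real.exp (-t * φ lam) with hv_def
  have hv : ∀ lam, 0 ≤ lam → ∫ ω, Real.exp (-(lam * S t ω)) ∂P = v lam := by
    intro lam hlam
    simp only [hv_def]
    rw [← hlap t ht0.le lam hlam]
    simp only [neg_mul]
  have key := aux_key P (S t) (hS t) (hpos t ht0) hp0 v hv
  have hC'pos : 0 < C' := by rw [hC'_def]; positivity
  have htC : 0 < t * C := mul_pos ht0 hC
  -- bound on (0,1]
  have hB1 : ∫⁻ l in Ioc (0:ℝ) 1, ENNReal.ofReal (l ^ (p-1) * v l) ≤ ENNReal.ofReal (1/a) := by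
    have step1 : ∫⁻ l in Ioc (0:ℝ) 1, ENNReal.ofReal (l ^ (p-1) * v l)
        ≤ ∫⁻ l in Ioc (0:ℝ) 1, ENNReal.ofReal (l ^ (a-1)) := by
      refine lintegral_mono_ae ?_
      filter_upwards [self_mem_ae_restrict measurableSet_Ioc] with l hl
      obtain ⟨hl0, hl1⟩ := hl
      refine ENNReal.ofReal_le_ofReal ?_
      have h1 : v l ≤ 1 := by
        simp only [hv_def]
        rw [Real.exp_le_one_iff]
        have := hφ0 l hl0.le
        nlinarith
      have h2 : l ^ (p-1) ≤ l ^ (a-1) :=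
        Real.rpow_le_rpow_of_exponent_ge hl0 hl1 (by linarith)
      calc l ^ (p-1) * v l ≤ l ^ (p-1) * 1 :=
            mul_le_mul_of_nonneg_left h1 (Real.rpow_nonneg hl0.le _)
        _ = l ^ (p-1) := mul_one _
        _ ≤ l ^ (a-1) := h2
    refine step1.trans ?_
    have hint : IntegrableOn (fun l : ℝ => l ^ (a-1)) (Ioc 0 1) := by
      have := intervalIntegral.intervalIntegrable_rpow' (a := 0) (b := 1) (r := a-1)
        (by linarith)
      rwa [intervalIntegrable_iff_integrableOn_Ioc_of_le zero_le_one] at this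
    rw [← MeasureTheory.ofReal_integral_eq_lintegral_ofReal hint ?_]
    · refine ENNReal.ofReal_le_ofReal (le_of_eq ?_)
      open intervalIntegral in
      rw [← intervalIntegral.integral_of_le zero_le_one,
        integral_rpow (Or.inl (by linarith : (-1:ℝ) < a - 1)),
        show a - 1 + 1 = a from by ring, Real.one_rpow, Real.zero_rpow ha.ne']
      norm_num
    · filter_upwards [self_mem_ae_restrict measurableSet_Ioc] with l hl
      exact Real.rpow_nonneg hl.1.le _
  -- bound on (1,∞)
  have hB2 : ∫⁻ l in Ioi (1:ℝ), ENNReal.ofReal (l ^ (p-1) * v l)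
      ≤ ENNReal.ofReal ((t*C) ^ (-(2*p)/α) * (2/α) * Real.Gamma (2*p/α)) := by
    have step1 : ∫⁻ l in Ioi (1:ℝ), ENNReal.ofReal (l ^ (p-1) * v l)
        ≤ ∫⁻ l in Ioi (1:ℝ), ENNReal.ofReal (l ^ (p-1) * Real.exp (-(t*C) * l ^ (α/2))) := by
      refine lintegral_mono_ae ?_
      filter_upwards [self_mem_ae_restrict measurableSet_Ioi] with l hl
      have hl1 : (1:ℝ) ≤ l := le_of_lt hl
      refine ENNReal.ofReal_le_ofReal ?_
      refine mul_le_mul_of_nonneg_left ?_ (Real.rpow_nonneg (by linarith) _)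
      simp only [hv_def]
      refine Real.exp_le_exp.mpr ?_
      have := hφ l hl1
      nlinarith
    refine step1.trans ?_
    refine le_trans (lintegral_mono_set (Ioi_subset_Ioi zero_le_one)) ?_
    rw [← MeasureTheory.ofReal_integral_eq_lintegral_ofReal
      (aux_integrableOn (by linarith : (-1:ℝ) < p - 1) (by positivity : (0:ℝ) < α/2) htC) ?_]
    · refine ENNReal.ofReal_le_ofReal (le_of_eq ?_)
      rw [integral_rpow_mul_exp_neg_mul_rpow (by positivity) (by linarith) htC,
        show p - 1 + 1 = p from by ring,
        show -p/(α/2) = -(2*p)/α from by rw [div_div_eq_mul_div]; ring,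
        show p/(α/2) = 2*p/α from by rw [div_div_eq_mul_div]; ring,
        show (1:ℝ)/(α/2) = 2/α from by rw [div_div_eq_mul_div]; ring]
    · filter_upwards [self_mem_ae_restrict measurableSet_Ioi] with l hl
      have hl0 : (0:ℝ) < l := hl
      positivity
  -- combine
  have hΓp : 0 < Real.Gamma p := Real.Gamma_pos_of_pos hp0
  have hΓ2p : 0 ≤ Real.Gamma (2*p/α) := Real.Gamma_nonneg_of_nonneg (by positivity)
  have htail : 0 ≤ (t*C) ^ (-(2*p)/α) * (2/α) * Real.Gamma (2*p/α) := by
    have : 0 ≤ (t*C) ^ (-(2*p)/α) * (2/α) := by positivity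
    exact mul_nonneg this hΓ2p
  have hT1 : 1 ≤ t ^ (-(2*p)/α) := by
    refine Real.one_le_rpow_of_pos_of_le_one_of_nonpos ht0 ht1 ?_
    apply div_nonpos_of_nonpos_of_nonneg <;> linarith
  have hreal : 1/a + (t*C) ^ (-(2*p)/α) * (2/α) * Real.Gamma (2*p/α)
      ≤ Real.Gamma p * (C' * t ^ (-(2*p)/α)) := by
    have hmul : (t*C) ^ (-(2*p)/α) = t ^ (-(2*p)/α) * C ^ (-(2*p)/α) :=
      Real.mul_rpow ht0.le hC.le
    have hTpos : 0 < t ^ (-(2*p)/α) := Real.rpow_pos_of_pos ht0 _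
    have h1 : C ^ (-(2*p)/α) ≤ M2 := hM2le p ⟨hpa, hpb⟩
    have h2 : Real.Gamma (2*p/α) ≤ M := hMle _
      ⟨(div_le_div_iff_of_pos_right hα0).mpr (by linarith),
       (div_le_div_iff_of_pos_right hα0).mpr (by linarith)⟩
    have h3 : m ≤ Real.Gamma p := hmle p ⟨hpa, hpb⟩
    have hC'm : m * C' = 1/a + M2 * (2/α) * M := by
      rw [hC'_def]; field_simp
    have hA : C ^ (-(2*p)/α) * (2/α) * Real.Gamma (2*p/α) ≤ M2 * (2/α) * M :=
      mul_le_mul (mul_le_mul_of_nonneg_right h1 (by positivity)) h2 hΓ2p (by positivity)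
    have hB : t ^ (-(2*p)/α) * (C ^ (-(2*p)/α) * (2/α) * Real.Gamma (2*p/α))
        ≤ t ^ (-(2*p)/α) * (M2 * (2/α) * M) := mul_le_mul_of_nonneg_left hA hTpos.le
    have hD : 1/a ≤ 1/a * t ^ (-(2*p)/α) := le_mul_of_one_le_right (by positivity) hT1
    have hE : t ^ (-(2*p)/α) * (m * C') ≤ t ^ (-(2*p)/α) * (Real.Gamma p * C') :=
      mul_le_mul_of_nonneg_left (mul_le_mul_of_nonneg_right h3 hC'pos.le) hTpos.le
    rw [hmul]
    nlinarith [hB, hD, hE, hC'm]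
  have hsum := add_le_add hB1 hB2
  rw [← lintegral_union measurableSet_Ioi (Ioc_disjoint_Ioi le_rfl),
    Ioc_union_Ioi_eq_Ioi zero_le_one] at hsum
  have hfin : ENNReal.ofReal (Real.Gamma p) * ∫⁻ ω, ENNReal.ofReal ((S t ω) ^ (-p)) ∂P
      ≤ ENNReal.ofReal (Real.Gamma p) * ENNReal.ofReal (C' * t ^ (-(2*p)/α)) := by
    rw [key]
    refine hsum.trans ?_
    calc ENNReal.ofReal (1/a) + ENNReal.ofReal ((t*C) ^ (-(2*p)/α) * (2/α) * Real.Gamma (2*p/α))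
        = ENNReal.ofReal (1/a + (t*C) ^ (-(2*p)/α) * (2/α) * Real.Gamma (2*p/α)) :=
          (ENNReal.ofReal_add (by positivity) htail).symm
      _ ≤ ENNReal.ofReal (Real.Gamma p * (C' * t ^ (-(2*p)/α))) :=
          ENNReal.ofReal_le_ofReal hreal
      _ = ENNReal.ofReal (Real.Gamma p) * ENNReal.ofReal (C' * t ^ (-(2*p)/α)) :=
          ENNReal.ofReal_mul hΓp.le
  exact (ENNReal.mul_le_mul_iff_right (by simp [ENNReal.ofReal_eq_zero]; exact hΓp)
    ENNReal.ofReal_ne_top).mp hfin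
end

section
/- Let Φ_s(x) = x + u_s(x) with ‖∇u_s‖_∞ ≤ 1/2 and [∇u_s]_γ ≤ 1/2 uniformly in s, γ ∈ (0,1), and define g_s(y,z) := Φ_s(Φ_s^{-1}(y) + z) − y. Then there is a constant C₀ = C₀(d,γ) such that for all s, y, z: ‖∇_y g_s(·,z)‖_∞ ≤ C₀ (1 ∧ |z|^γ) and |g_s(y,z)| ≤ (3/2)|z|. -/
open Set
open scoped NNReal

section Aux

variable {E : Type*} [NormedAddCommGroup E] [NormedSpace ℝ E] [CompleteSpace E] [Nonempty E]

lemma aux13 (γ : ℝ) (hγ : γ ∈ Ioo (0:ℝ) 1) (v : E → E)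
    (hv : ContDiff ℝ 1 v)
    (hgrad : ∀ x, ‖fderiv ℝ v x‖ ≤ 1 / 2)
    (hhold : ∀ x y, ‖fderiv ℝ v x - fderiv ℝ v y‖ ≤ (1 / 2) * ‖x - y‖ ^ γ)
    (y z : E) :
    ‖fderiv ℝ (fun y' =>
        ((Function.invFun (fun x => x + v x) y' + z)
          + v (Function.invFun (fun x => x + v x) y' + z)) - y') y‖
      ≤ 2 * min 1 (‖z‖ ^ γ) ∧
    ‖((Function.invFun (fun x => x + v x) y + z)
        + v (Function.invFun (fun x => x + v x) y + z)) - y‖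
      ≤ (3 / 2) * ‖z‖ := by
  have hvdiff : Differentiable ℝ v := hv.differentiable one_ne_zero
  have hvlip : LipschitzWith (1/2 : ℝ≥0) v := by
    apply lipschitzWith_of_nnnorm_fderiv_le hvdiff
    intro x
    rw [← NNReal.coe_le_coe, coe_nnnorm]
    simpa using hgrad x
  have hvn : ∀ a b : E, ‖v a - v b‖ ≤ (1/2) * ‖a - b‖ := by
    intro a b
    simpa [dist_eq_norm] using hvlip.dist_le_mul a b
  set Φ : E → E := fun x => x + v x with hΦ
  have hsurj : Function.Surjective Φ := by
    intro w
    have hF : LipschitzWith (1/2 : ℝ≥0) (fun x : E => w - v x) := by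
      apply LipschitzWith.of_dist_le_mul
      intro a b
      calc dist (w - v a) (w - v b) = ‖v b - v a‖ := by
            rw [dist_eq_norm]; congr 1; abel
        _ ≤ (1/2) * ‖b - a‖ := hvn b a
        _ = (1/2 : ℝ≥0) * dist a b := by rw [dist_eq_norm, norm_sub_rev]; norm_num
    have hc : ContractingWith (1/2 : ℝ≥0) (fun x : E => w - v x) :=
      ⟨by rw [← NNReal.coe_lt_coe]; norm_num, hF⟩
    refine ⟨hc.fixedPoint _, ?_⟩
    have hfix := hc.fixedPoint_isFixedPt
    simp only [Function.IsFixedPt] at hfix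
    simp only [hΦ]
    exact (sub_eq_iff_eq_add.mp hfix).symm
  -- the right inverse property
  have hri : ∀ w, Φ (Function.invFun Φ w) = w :=
    fun w => Function.rightInverse_invFun hsurj w
  set g : E → E := Function.invFun Φ with hg
  -- g is 2-Lipschitz
  have hglip : LipschitzWith (2 : ℝ≥0) g := by
    apply LipschitzWith.of_dist_le_mul
    intro p q
    have h1 : p - q = (g p - g q) + (v (g p) - v (g q)) := by
      have := hri p; have := hri q
      calc p - q = Φ (g p) - Φ (g q) := by rw [hri p, hri q]
        _ = (g p - g q) + (v (g p) - v (g q)) := by simp only [hΦ]; abel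
    have h2 : ‖g p - g q‖ ≤ ‖p - q‖ + (1/2) * ‖g p - g q‖ := by
      calc ‖g p - g q‖ = ‖(p - q) - (v (g p) - v (g q))‖ := by rw [h1]; congr 1; abel
        _ ≤ ‖p - q‖ + ‖v (g p) - v (g q)‖ := norm_sub_le _ _
        _ ≤ ‖p - q‖ + (1/2) * ‖g p - g q‖ := by linarith [hvn (g p) (g q)]
    rw [dist_eq_norm, dist_eq_norm]
    push_cast
    linarith
  -- part 2
  have part2 : ‖((g y + z) + v (g y + z)) - y‖ ≤ (3/2) * ‖z‖ := by
    have hy : g y + v (g y) = y := hri y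
    calc ‖((g y + z) + v (g y + z)) - y‖
        = ‖z + (v (g y + z) - v (g y))‖ := by
          rw [show ((g y + z) + v (g y + z)) - y
              = ((g y + z) + v (g y + z)) - (g y + v (g y)) by rw [hy]]
          congr 1; abel
      _ ≤ ‖z‖ + ‖v (g y + z) - v (g y)‖ := norm_add_le _ _
      _ ≤ ‖z‖ + (1/2) * ‖z‖ := by
          have := hvn (g y + z) (g y)
          simpa using this
      _ = (3/2) * ‖z‖ := by ring
  refine ⟨?_, part2⟩
  -- part 1: derivative computation
  set a := g y with ha
  -- invertible derivative of Φ at a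
  have hnorm : ‖-(fderiv ℝ v a)‖ < 1 := by
    rw [norm_neg]; linarith [hgrad a]
  set w : (E →L[ℝ] E)ˣ := Units.oneSub (-(fderiv ℝ v a)) hnorm with hw
  set f' : E ≃L[ℝ] E := ContinuousLinearEquiv.unitsEquiv ℝ E w with hf'
  have hf'coe : (f' : E →L[ℝ] E) = ContinuousLinearMap.id ℝ E + fderiv ℝ v a := by
    ext x
    simp [hf', hw, Units.oneSub, sub_neg_eq_add]
  have hΦderiv : ∀ x : E, HasFDerivAt Φ (ContinuousLinearMap.id ℝ E + fderiv ℝ v x) x := by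
    intro x
    exact (hasFDerivAt_id x).add (hvdiff x).hasFDerivAt
  have hgderiv : HasFDerivAt g (f'.symm : E →L[ℝ] E) y := by
    apply HasFDerivAt.of_local_left_inverse hglip.continuous.continuousAt
    · rw [hf'coe]; exact hΦderiv a
    · exact Filter.Eventually.of_forall hri
  have hcomp : HasFDerivAt (fun y' => Φ (g y' + z) - y')
      (((ContinuousLinearMap.id ℝ E + fderiv ℝ v (a + z)).comp
          (f'.symm : E →L[ℝ] E)) - ContinuousLinearMap.id ℝ E) y := by
    have h1 : HasFDerivAt (fun y' => g y' + z) (f'.symm : E →L[ℝ] E) y :=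
      hgderiv.add_const z
    have h2 := (hΦderiv (a + z)).comp y h1
    exact h2.sub (hasFDerivAt_id y)
  have hfd : fderiv ℝ (fun y' => ((g y' + z) + v (g y' + z)) - y') y
      = ((ContinuousLinearMap.id ℝ E + fderiv ℝ v (a + z)).comp
          (f'.symm : E →L[ℝ] E)) - ContinuousLinearMap.id ℝ E := by
    exact hcomp.fderiv
  rw [hfd]
  -- rewrite as (F - f') ∘ f'.symm
  have hkey : ((ContinuousLinearMap.id ℝ E + fderiv ℝ v (a + z)).comp
          (f'.symm : E →L[ℝ] E)) - ContinuousLinearMap.id ℝ E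
      = (fderiv ℝ v (a + z) - fderiv ℝ v a).comp (f'.symm : E →L[ℝ] E) := by
    have hc : (f' : E →L[ℝ] E).comp (f'.symm : E →L[ℝ] E) = ContinuousLinearMap.id ℝ E :=
      f'.coe_comp_coe_symm
    calc ((ContinuousLinearMap.id ℝ E + fderiv ℝ v (a + z)).comp (f'.symm : E →L[ℝ] E))
          - ContinuousLinearMap.id ℝ E
        = ((ContinuousLinearMap.id ℝ E + fderiv ℝ v (a + z)).comp (f'.symm : E →L[ℝ] E))
          - (f' : E →L[ℝ] E).comp (f'.symm : E →L[ℝ] E) := by rw [hc]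
      _ = ((ContinuousLinearMap.id ℝ E + fderiv ℝ v (a + z)) - (f' : E →L[ℝ] E)).comp
            (f'.symm : E →L[ℝ] E) := by rw [ContinuousLinearMap.sub_comp]
      _ = (fderiv ℝ v (a + z) - fderiv ℝ v a).comp (f'.symm : E →L[ℝ] E) := by
          rw [hf'coe]; congr 1; abel
  rw [hkey]
  -- bound the norm
  have hsymm : ‖(f'.symm : E →L[ℝ] E)‖ ≤ 2 := by
    have : fderiv ℝ g y = (f'.symm : E →L[ℝ] E) := hgderiv.fderiv
    rw [← this]
    simpa using norm_fderiv_le_of_lipschitz ℝ hglip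
  have hdiffbound : ‖fderiv ℝ v (a + z) - fderiv ℝ v a‖ ≤ min 1 (‖z‖ ^ γ) := by
    apply le_min
    · calc ‖fderiv ℝ v (a + z) - fderiv ℝ v a‖
          ≤ ‖fderiv ℝ v (a + z)‖ + ‖fderiv ℝ v a‖ := norm_sub_le _ _
        _ ≤ 1 := by linarith [hgrad (a + z), hgrad a]
    · have := hhold (a + z) a
      have hz : a + z - a = z := by abel
      rw [hz] at this
      have h0 : (0:ℝ) ≤ ‖z‖ ^ γ := Real.rpow_nonneg (norm_nonneg z) γ
      linarith
  calc ‖(fderiv ℝ v (a + z) - fderiv ℝ v a).comp (f'.symm : E →L[ℝ] E)‖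
      ≤ ‖fderiv ℝ v (a + z) - fderiv ℝ v a‖ * ‖(f'.symm : E →L[ℝ] E)‖ :=
        ContinuousLinearMap.opNorm_comp_le _ _
    _ ≤ min 1 (‖z‖ ^ γ) * 2 := by
        apply mul_le_mul hdiffbound hsymm (norm_nonneg _)
        exact le_min zero_le_one (Real.rpow_nonneg (norm_nonneg z) γ)
    _ = 2 * min 1 (‖z‖ ^ γ) := by ring

end Aux

/-- Lemma 3.2 / estimate (3.10): with `Φ_s(x) = x + u_s(x)`, `‖∇u_s‖_∞ ≤ 1/2`,
`[∇u_s]_γ ≤ 1/2` uniformly in `s`, and `g_s(y,z) := Φ_s(Φ_s⁻¹(y) + z) − y`,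
there is `C₀ = C₀(d,γ)` with `‖∇_y g_s(·,z)‖_∞ ≤ C₀ (1 ∧ |z|^γ)` and
`|g_s(y,z)| ≤ (3/2)|z|`. -/
theorem stmt13 (d : ℕ) (hd : 1 ≤ d) (γ : ℝ) (hγ : γ ∈ Ioo (0:ℝ) 1)
    (u : ℝ → EuclideanSpace ℝ (Fin d) → EuclideanSpace ℝ (Fin d))
    (hu : ∀ s, ContDiff ℝ 1 (u s))
    (hgrad : ∀ s x, ‖fderiv ℝ (u s) x‖ ≤ 1 / 2)
    (hhold : ∀ s x y, ‖fderiv ℝ (u s) x - fderiv ℝ (u s) y‖ ≤ (1 / 2) * ‖x - y‖ ^ γ) :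
    ∃ C₀ > (0:ℝ), ∀ (s : ℝ) (y z : EuclideanSpace ℝ (Fin d)),
      ‖fderiv ℝ (fun y' =>
          ((Function.invFun (fun x => x + u s x) y' + z)
            + u s (Function.invFun (fun x => x + u s x) y' + z)) - y') y‖
        ≤ C₀ * min 1 (‖z‖ ^ γ) ∧
      ‖((Function.invFun (fun x => x + u s x) y + z)
          + u s (Function.invFun (fun x => x + u s x) y + z)) - y‖
        ≤ (3 / 2) * ‖z‖ := by
  exact ⟨2, by norm_num, fun s y z =>
    aux13 γ hγ (u s) (hu s) (hgrad s) (hhold s) y z⟩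
end

section
/- In the setting of the previous statement, for any γ₁, γ₂ ≥ 0 with γ₁ + γ₂ = γ ∈ (0,1), there is a constant C₁ = C₁(d,γ₁,γ₂) such that ‖∇_y g_s(·,z)‖_{γ₁} ≤ C₁ (1 ∧ |z|^{γ₂}) for all s and z, where ‖h‖_{γ₁} = ‖h‖_∞ + [h]_{γ₁}. The proof interpolates: [∇g_s(·,z)]_{γ₁} ≤ (2‖∇g_s(·,z)‖_∞)^{γ₂/γ} [∇g_s(·,z)]_γ^{γ₁/γ}. -/
open Set Function NNReal Topology

section aux
variable {E : Type*} [NormedAddCommGroup E] [NormedSpace ℝ E] [CompleteSpace E] [Nonempty E]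
variable {f : E → E}

set_option linter.unusedSectionVars false

theorem aux_lip (hf : ContDiff ℝ 1 f) (hg : ∀ x, ‖fderiv ℝ f x‖ ≤ 1/2) :
    ∀ x y, ‖f x - f y‖ ≤ (1/2) * ‖x - y‖ := by
  intro x y
  have h := lipschitzWith_of_nnnorm_fderiv_le (C := (1/2 : ℝ≥0))
    (hf.differentiable one_ne_zero) (fun x => by
      have := hg x
      rw [← NNReal.coe_le_coe]
      simpa using this)
  have := h.dist_le_mul x y
  simp only [dist_eq_norm] at this
  simpa using this

theorem aux_inj (hf : ContDiff ℝ 1 f) (hg : ∀ x, ‖fderiv ℝ f x‖ ≤ 1/2) :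
    Function.Injective (fun x => x + f x) := by
  intro x y hxy
  simp only at hxy
  have h1 : x - y = f y - f x := by
    rw [sub_eq_sub_iff_add_eq_add, hxy, add_comm]
  have h2 : ‖x - y‖ ≤ (1/2) * ‖x - y‖ := by
    calc ‖x - y‖ = ‖f y - f x‖ := by rw [h1]
      _ ≤ (1/2) * ‖y - x‖ := aux_lip hf hg y x
      _ = (1/2) * ‖x - y‖ := by rw [norm_sub_rev]
  have h3 : ‖x - y‖ = 0 := by nlinarith [norm_nonneg (x - y)]
  exact sub_eq_zero.mp (norm_eq_zero.mp h3)

theorem aux_surj (hf : ContDiff ℝ 1 f) (hg : ∀ x, ‖fderiv ℝ f x‖ ≤ 1/2) :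
    Function.Surjective (fun x => x + f x) := by
  intro y
  have hc : ContractingWith (1/2 : ℝ≥0) (fun x => y - f x) := by
    constructor
    · exact NNReal.coe_lt_coe.mp (by norm_num)
    · apply LipschitzWith.of_dist_le_mul
      intro a b
      simp only [dist_eq_norm]
      have h1 : y - f a - (y - f b) = f b - f a := by abel
      rw [h1]
      calc ‖f b - f a‖ ≤ (1/2) * ‖b - a‖ := aux_lip hf hg b a
        _ = ((1/2 : ℝ≥0) : ℝ) * ‖a - b‖ := by rw [norm_sub_rev]; norm_num
  refine ⟨hc.fixedPoint _, ?_⟩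
  have hfix := hc.fixedPoint_isFixedPt
  unfold Function.IsFixedPt at hfix
  simp only at hfix ⊢
  rw [sub_eq_iff_eq_add] at hfix
  exact hfix.symm

theorem aux_lower (hf : ContDiff ℝ 1 f) (hg : ∀ x, ‖fderiv ℝ f x‖ ≤ 1/2) (x x' : E) :
    (1/2) * ‖x - x'‖ ≤ ‖(x + f x) - (x' + f x')‖ := by
  have h1 : (x + f x) - (x' + f x') = (x - x') + (f x - f x') := by abel
  have h4 : ‖x - x'‖ ≤ ‖(x - x') + (f x - f x')‖ + ‖f x - f x'‖ := by
    calc ‖x - x'‖ = ‖((x - x') + (f x - f x')) - (f x - f x')‖ := by congr 1; abel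
      _ ≤ _ := norm_sub_le _ _
  have h3 := aux_lip hf hg x x'
  rw [h1]; linarith

theorem aux_invFun_lip (hf : ContDiff ℝ 1 f) (hg : ∀ x, ‖fderiv ℝ f x‖ ≤ 1/2) (y y' : E) :
    ‖invFun (fun x => x + f x) y - invFun (fun x => x + f x) y'‖ ≤ 2 * ‖y - y'‖ := by
  have hr : ∀ w : E, invFun (fun x => x + f x) w + f (invFun (fun x => x + f x) w) = w :=
    fun w => Function.rightInverse_invFun (aux_surj hf hg) w
  have h := aux_lower hf hg (invFun (fun x => x + f x) y) (invFun (fun x => x + f x) y')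
  rw [hr y, hr y'] at h
  linarith

end aux

section units
variable {E : Type*} [NormedAddCommGroup E] [NormedSpace ℝ E] [CompleteSpace E] [Nonempty E]
variable {f : E → E}
set_option linter.unusedSectionVars false

noncomputable def auxUnit (hg : ∀ x, ‖fderiv ℝ f x‖ ≤ 1/2) (x : E) : (E →L[ℝ] E)ˣ :=
  Units.oneSub (-(fderiv ℝ f x)) (by
    simpa using lt_of_le_of_lt (hg x) (by norm_num : (1:ℝ)/2 < 1))

theorem auxUnit_val (hg : ∀ x, ‖fderiv ℝ f x‖ ≤ 1/2) (x : E) :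
    (auxUnit hg x).val = 1 + fderiv ℝ f x := by
  simp [auxUnit, sub_neg_eq_add]

theorem auxUnit_inv_norm (hg : ∀ x, ‖fderiv ℝ f x‖ ≤ 1/2) (x : E) :
    ‖((auxUnit hg x)⁻¹ : (E →L[ℝ] E)ˣ).val‖ ≤ 2 := by
  set V := ((auxUnit hg x)⁻¹ : (E →L[ℝ] E)ˣ).val with hV
  have hmul : (auxUnit hg x).val * V = 1 := Units.mul_inv _
  rw [auxUnit_val] at hmul
  have hVeq : V = 1 - fderiv ℝ f x * V := by
    have : V + fderiv ℝ f x * V = 1 := by rw [← hmul]; noncomm_ring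
    linear_combination (norm := noncomm_ring) this
  have h1 : ‖V‖ ≤ ‖(1 : E →L[ℝ] E)‖ + ‖fderiv ℝ f x * V‖ := by
    nth_rewrite 1 [hVeq]; exact norm_sub_le _ _
  have h2 : ‖fderiv ℝ f x * V‖ ≤ ‖fderiv ℝ f x‖ * ‖V‖ := norm_mul_le _ _
  have h3 : ‖(1 : E →L[ℝ] E)‖ ≤ 1 := ContinuousLinearMap.norm_id_le
  have h4 := hg x
  have h5 : (0:ℝ) ≤ ‖V‖ := norm_nonneg _
  nlinarith

theorem aux_strict (hf : ContDiff ℝ 1 f) (hg : ∀ x, ‖fderiv ℝ f x‖ ≤ 1/2) (x : E) :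
    HasStrictFDerivAt (fun x => x + f x) (auxUnit hg x).val x := by
  rw [auxUnit_val]
  exact (hasStrictFDerivAt_id x).add (hf.contDiffAt.hasStrictFDerivAt one_ne_zero)

theorem aux_invFun_hasFDerivAt (hf : ContDiff ℝ 1 f) (hg : ∀ x, ‖fderiv ℝ f x‖ ≤ 1/2) (y : E) :
    HasFDerivAt (invFun (fun x => x + f x))
      (((auxUnit hg (invFun (fun x => x + f x) y))⁻¹ : (E →L[ℝ] E)ˣ).val) y := by
  have hx : invFun (fun x => x + f x) y + f (invFun (fun x => x + f x) y) = y :=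
    Function.rightInverse_invFun (aux_surj hf hg) y
  set x₀ := invFun (fun x => x + f x) y with hx₀
  set U := auxUnit hg x₀ with hU
  set e : E ≃L[ℝ] E := ContinuousLinearEquiv.unitsEquiv ℝ E U with he
  have hce : (e : E →L[ℝ] E) = U.val := rfl
  have hs : HasStrictFDerivAt (fun x => x + f x) (e : E →L[ℝ] E) x₀ := by
    rw [hce]; exact aux_strict hf hg x₀
  have hleft : ∀ᶠ w in 𝓝 x₀, invFun (fun x => x + f x) ((fun x => x + f x) w) = w :=
    Filter.Eventually.of_forall (fun w => Function.leftInverse_invFun (aux_inj hf hg) w)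
  have h := hs.to_local_left_inverse hleft
  have hsymm : (e.symm : E →L[ℝ] E) = (U⁻¹ : (E →L[ℝ] E)ˣ).val := rfl
  rw [hsymm] at h
  rw [hx] at h
  exact h.hasFDerivAt

end units

section deriv
variable {E : Type*} [NormedAddCommGroup E] [NormedSpace ℝ E] [CompleteSpace E] [Nonempty E]
variable {f : E → E}
set_option linter.unusedSectionVars false

theorem aux_g_fderiv (hf : ContDiff ℝ 1 f) (hg : ∀ x, ‖fderiv ℝ f x‖ ≤ 1/2) (z y : E) :
    fderiv ℝ (fun w => ((invFun (fun x => x + f x) w + z)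
        + f (invFun (fun x => x + f x) w + z)) - w) y
      = ((auxUnit hg (invFun (fun x => x + f x) y + z)).val.comp
          (((auxUnit hg (invFun (fun x => x + f x) y))⁻¹ : (E →L[ℝ] E)ˣ).val))
        - ContinuousLinearMap.id ℝ E := by
  have h1 := aux_invFun_hasFDerivAt hf hg y
  have h2 := h1.add_const z
  have h3 := (aux_strict hf hg (invFun (fun x => x + f x) y + z)).hasFDerivAt
  have h4 := h3.comp y h2
  have h5 := h4.sub (hasFDerivAt_id y)
  exact h5.fderiv

theorem aux_D_eq (hg : ∀ x, ‖fderiv ℝ f x‖ ≤ 1/2) (x z : E) :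
    (auxUnit hg (x + z)).val.comp (((auxUnit hg x)⁻¹ : (E →L[ℝ] E)ˣ).val)
        - ContinuousLinearMap.id ℝ E
      = (fderiv ℝ f (x + z) - fderiv ℝ f x) * ((auxUnit hg x)⁻¹ : (E →L[ℝ] E)ˣ).val := by
  set V := ((auxUnit hg x)⁻¹ : (E →L[ℝ] E)ˣ).val with hV
  have hmul : (1 + fderiv ℝ f x) * V = 1 := by
    rw [← auxUnit_val hg x]; exact Units.mul_inv _
  have hid : ContinuousLinearMap.id ℝ E = (1 : E →L[ℝ] E) := rfl
  have hcomp : (auxUnit hg (x + z)).val.comp V = (auxUnit hg (x + z)).val * V := rfl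
  rw [hid, hcomp, auxUnit_val]
  calc (1 + fderiv ℝ f (x + z)) * V - 1
      = (fderiv ℝ f (x + z) - fderiv ℝ f x) * V + ((1 + fderiv ℝ f x) * V - 1) := by
        noncomm_ring
    _ = (fderiv ℝ f (x + z) - fderiv ℝ f x) * V := by rw [hmul]; abel

theorem aux_Vdiff (hg : ∀ x, ‖fderiv ℝ f x‖ ≤ 1/2) (x x' : E) :
    ((auxUnit hg x)⁻¹ : (E →L[ℝ] E)ˣ).val - ((auxUnit hg x')⁻¹ : (E →L[ℝ] E)ˣ).val
      = ((auxUnit hg x)⁻¹ : (E →L[ℝ] E)ˣ).val * (fderiv ℝ f x' - fderiv ℝ f x)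
          * ((auxUnit hg x')⁻¹ : (E →L[ℝ] E)ˣ).val := by
  set Vx := ((auxUnit hg x)⁻¹ : (E →L[ℝ] E)ˣ).val with hVx
  set Vx' := ((auxUnit hg x')⁻¹ : (E →L[ℝ] E)ˣ).val with hVx'
  have e1 : Vx * (1 + fderiv ℝ f x) = 1 := by
    rw [← auxUnit_val hg x]; exact Units.inv_mul _
  have e2 : (1 + fderiv ℝ f x') * Vx' = 1 := by
    rw [← auxUnit_val hg x']; exact Units.mul_inv _
  calc Vx - Vx' = Vx * ((1 + fderiv ℝ f x') * Vx') - (Vx * (1 + fderiv ℝ f x)) * Vx' := by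
        rw [e1, e2, mul_one, one_mul]
    _ = Vx * (fderiv ℝ f x' - fderiv ℝ f x) * Vx' := by noncomm_ring

end deriv

section est
variable {E : Type*} [NormedAddCommGroup E] [NormedSpace ℝ E] [CompleteSpace E] [Nonempty E]
variable {f : E → E} {γ : ℝ}
set_option linter.unusedSectionVars false

theorem aux_D_norm (hg : ∀ x, ‖fderiv ℝ f x‖ ≤ 1/2)
    (hhold : ∀ x y, ‖fderiv ℝ f x - fderiv ℝ f y‖ ≤ (1/2) * ‖x - y‖ ^ γ)
    (x z : E) :
    ‖(auxUnit hg (x + z)).val.comp (((auxUnit hg x)⁻¹ : (E →L[ℝ] E)ˣ).val)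
        - ContinuousLinearMap.id ℝ E‖ ≤ 2 * min 1 (‖z‖ ^ γ) := by
  rw [aux_D_eq]
  have h1 : ‖fderiv ℝ f (x + z) - fderiv ℝ f x‖ ≤ min 1 (‖z‖ ^ γ) := by
    refine le_min ?_ ?_
    · calc ‖fderiv ℝ f (x + z) - fderiv ℝ f x‖ ≤ ‖fderiv ℝ f (x + z)‖ + ‖fderiv ℝ f x‖ :=
        norm_sub_le _ _
      _ ≤ 1 := by have := hg (x + z); have := hg x; linarith
    · have := hhold (x + z) x
      rw [add_sub_cancel_left] at this
      have hp : (0:ℝ) ≤ ‖z‖ ^ γ := Real.rpow_nonneg (norm_nonneg _) _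
      linarith
  have h2 := auxUnit_inv_norm hg x
  have h3 := norm_mul_le (fderiv ℝ f (x + z) - fderiv ℝ f x)
    (((auxUnit hg x)⁻¹ : (E →L[ℝ] E)ˣ).val)
  have h4 : (0:ℝ) ≤ ‖fderiv ℝ f (x + z) - fderiv ℝ f x‖ := norm_nonneg _
  have h5 : (0:ℝ) ≤ ‖((auxUnit hg x)⁻¹ : (E →L[ℝ] E)ˣ).val‖ := norm_nonneg _
  have h6 : (0:ℝ) ≤ min 1 (‖z‖ ^ γ) := le_min zero_le_one (Real.rpow_nonneg (norm_nonneg _) _)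
  nlinarith

theorem aux_D_holder (hg : ∀ x, ‖fderiv ℝ f x‖ ≤ 1/2)
    (hhold : ∀ x y, ‖fderiv ℝ f x - fderiv ℝ f y‖ ≤ (1/2) * ‖x - y‖ ^ γ)
    (x x' z : E) :
    ‖((auxUnit hg (x + z)).val.comp (((auxUnit hg x)⁻¹ : (E →L[ℝ] E)ˣ).val)
        - ContinuousLinearMap.id ℝ E)
      - ((auxUnit hg (x' + z)).val.comp (((auxUnit hg x')⁻¹ : (E →L[ℝ] E)ˣ).val)
        - ContinuousLinearMap.id ℝ E)‖ ≤ 4 * ‖x - x'‖ ^ γ := by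
  rw [aux_D_eq, aux_D_eq]
  set Vx := ((auxUnit hg x)⁻¹ : (E →L[ℝ] E)ˣ).val with hVx
  set Vx' := ((auxUnit hg x')⁻¹ : (E →L[ℝ] E)ˣ).val with hVx'
  set Du := fderiv ℝ f (x + z) - fderiv ℝ f x with hDu
  set Du' := fderiv ℝ f (x' + z) - fderiv ℝ f x' with hDu'
  have hsplit : Du * Vx - Du' * Vx' = (Du - Du') * Vx + Du' * (Vx - Vx') := by noncomm_ring
  rw [hsplit]
  have hrp : (0:ℝ) ≤ ‖x - x'‖ ^ γ := Real.rpow_nonneg (norm_nonneg _) _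
  have hDud : ‖Du - Du'‖ ≤ ‖x - x'‖ ^ γ := by
    have heq : Du - Du' = (fderiv ℝ f (x + z) - fderiv ℝ f (x' + z))
        - (fderiv ℝ f x - fderiv ℝ f x') := by rw [hDu, hDu']; abel
    have t1 := hhold (x + z) (x' + z)
    rw [add_sub_add_right_eq_sub] at t1
    have t2 := hhold x x'
    calc ‖Du - Du'‖ ≤ ‖fderiv ℝ f (x + z) - fderiv ℝ f (x' + z)‖
        + ‖fderiv ℝ f x - fderiv ℝ f x'‖ := by rw [heq]; exact norm_sub_le _ _
      _ ≤ ‖x - x'‖ ^ γ := by linarith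
  have hDu'n : ‖Du'‖ ≤ 1 := by
    calc ‖Du'‖ ≤ ‖fderiv ℝ f (x' + z)‖ + ‖fderiv ℝ f x'‖ := norm_sub_le _ _
      _ ≤ 1 := by have := hg (x' + z); have := hg x'; linarith
  have hVd : ‖Vx - Vx'‖ ≤ 2 * ‖x - x'‖ ^ γ := by
    rw [aux_Vdiff hg x x']
    have t1 := norm_mul_le (Vx * (fderiv ℝ f x' - fderiv ℝ f x)) Vx'
    have t2 := norm_mul_le Vx (fderiv ℝ f x' - fderiv ℝ f x)
    have t3 : ‖Vx‖ ≤ 2 := auxUnit_inv_norm hg x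
    have t4 : ‖Vx'‖ ≤ 2 := auxUnit_inv_norm hg x'
    have t5 := hhold x' x
    rw [norm_sub_rev x' x] at t5
    have n1 : (0:ℝ) ≤ ‖Vx‖ := norm_nonneg _
    have n2 : (0:ℝ) ≤ ‖Vx'‖ := norm_nonneg _
    have n3 : (0:ℝ) ≤ ‖fderiv ℝ f x' - fderiv ℝ f x‖ := norm_nonneg _
    rw [← hVx, ← hVx']
    calc ‖Vx * (fderiv ℝ f x' - fderiv ℝ f x) * Vx'‖
        ≤ ‖Vx * (fderiv ℝ f x' - fderiv ℝ f x)‖ * ‖Vx'‖ := t1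
      _ ≤ (‖Vx‖ * ‖fderiv ℝ f x' - fderiv ℝ f x‖) * ‖Vx'‖ :=
          mul_le_mul_of_nonneg_right t2 n2
      _ ≤ (2 * (1 / 2 * ‖x - x'‖ ^ γ)) * 2 := by
          apply mul_le_mul _ t4 n2 (by positivity)
          exact mul_le_mul t3 t5 n3 (by norm_num)
      _ = 2 * ‖x - x'‖ ^ γ := by ring
  have hfinal := norm_add_le ((Du - Du') * Vx) (Du' * (Vx - Vx'))
  have m1 := norm_mul_le (Du - Du') Vx
  have m2 := norm_mul_le Du' (Vx - Vx')
  have t3 : ‖Vx‖ ≤ 2 := auxUnit_inv_norm hg x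
  have n1 : (0:ℝ) ≤ ‖Vx‖ := norm_nonneg _
  have n2 : (0:ℝ) ≤ ‖Du - Du'‖ := norm_nonneg _
  have n3 : (0:ℝ) ≤ ‖Du'‖ := norm_nonneg _
  have n4 : (0:ℝ) ≤ ‖Vx - Vx'‖ := norm_nonneg _
  nlinarith

end est

theorem aux_interp {c A B θ : ℝ} (hc : 0 ≤ c) (hA : 0 ≤ A) (hB : 0 ≤ B)
    (hθ0 : 0 ≤ θ) (hθ1 : θ ≤ 1) (h1 : c ≤ A) (h2 : c ≤ B) :
    c ≤ A ^ θ * B ^ (1 - θ) := by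
  rcases eq_or_lt_of_le hc with h | h
  · exact le_trans h.symm.le (by positivity)
  · have e1 : c = c ^ θ * c ^ (1 - θ) := by
      rw [← Real.rpow_add h, add_sub_cancel, Real.rpow_one]
    rw [e1]
    exact mul_le_mul (Real.rpow_le_rpow hc h1 hθ0)
      (Real.rpow_le_rpow hc h2 (by linarith)) (by positivity) (by positivity)

theorem aux_min_rpow {t θ : ℝ} (ht : 0 ≤ t) (hθ : 0 ≤ θ) :
    (min 1 t) ^ θ ≤ min 1 (t ^ θ) := by
  have hm0 : (0:ℝ) ≤ min 1 t := le_min zero_le_one ht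
  refine le_min (Real.rpow_le_one hm0 (min_le_left _ _) hθ)
    (Real.rpow_le_rpow hm0 (min_le_right _ _) hθ)

theorem aux_min_exp {t γ γ₂ : ℝ} (ht : 0 ≤ t) (hγ : 0 < γ) (hγ₂ : 0 ≤ γ₂) (hle : γ₂ ≤ γ) :
    min 1 (t ^ γ) ≤ min 1 (t ^ γ₂) := by
  have hm0 : (0:ℝ) ≤ min 1 (t ^ γ) := le_min zero_le_one (Real.rpow_nonneg ht _)
  have hθ0 : 0 ≤ γ₂ / γ := div_nonneg hγ₂ hγ.le
  have hθ1 : γ₂ / γ ≤ 1 := by rw [div_le_one hγ]; exact hle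
  have step1 : min 1 (t ^ γ) ≤ (min 1 (t ^ γ)) ^ (γ₂ / γ) := by
    rcases eq_or_lt_of_le hm0 with h | h
    · rw [← h]; positivity
    · calc min 1 (t ^ γ) = (min 1 (t ^ γ)) ^ (1:ℝ) := (Real.rpow_one _).symm
        _ ≤ (min 1 (t ^ γ)) ^ (γ₂ / γ) :=
          Real.rpow_le_rpow_of_exponent_ge h (min_le_left _ _) hθ1
  have step2 : (min 1 (t ^ γ)) ^ (γ₂ / γ) ≤ min 1 ((t ^ γ) ^ (γ₂ / γ)) :=
    aux_min_rpow (Real.rpow_nonneg ht _) hθ0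
  have step3 : (t ^ γ) ^ (γ₂ / γ) = t ^ γ₂ := by
    rw [← Real.rpow_mul ht]
    congr 1
    field_simp
  rw [step3] at step2
  exact le_trans step1 step2

theorem aux_min_pow_exp {t γ γ₂ : ℝ} (ht : 0 ≤ t) (hγ : 0 < γ) (hγ₂ : 0 ≤ γ₂) (hle : γ₂ ≤ γ) :
    (min 1 (t ^ γ)) ^ (γ₂ / γ) ≤ min 1 (t ^ γ₂) := by
  have step2 : (min 1 (t ^ γ)) ^ (γ₂ / γ) ≤ min 1 ((t ^ γ) ^ (γ₂ / γ)) :=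
    aux_min_rpow (Real.rpow_nonneg ht _) (div_nonneg hγ₂ hγ.le)
  have step3 : (t ^ γ) ^ (γ₂ / γ) = t ^ γ₂ := by
    rw [← Real.rpow_mul ht]
    congr 1
    field_simp
  rwa [step3] at step2

theorem stmt14' (d : ℕ) (hd : 1 ≤ d) (γ γ₁ γ₂ : ℝ) (hγ : γ ∈ Ioo (0:ℝ) 1)
    (hγ₁ : 0 ≤ γ₁) (hγ₂ : 0 ≤ γ₂) (hsum : γ₁ + γ₂ = γ)
    (u : ℝ → EuclideanSpace ℝ (Fin d) → EuclideanSpace ℝ (Fin d))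
    (hu : ∀ s, ContDiff ℝ 1 (u s))
    (hgrad : ∀ s x, ‖fderiv ℝ (u s) x‖ ≤ 1 / 2)
    (hhold : ∀ s x y, ‖fderiv ℝ (u s) x - fderiv ℝ (u s) y‖ ≤ (1 / 2) * ‖x - y‖ ^ γ) :
    ∃ C₁ > (0:ℝ), ∀ (s : ℝ) (z : EuclideanSpace ℝ (Fin d)),
      (∀ y, ‖fderiv ℝ (fun y' =>
          ((Function.invFun (fun x => x + u s x) y' + z)
            + u s (Function.invFun (fun x => x + u s x) y' + z)) - y') y‖
        ≤ C₁ * min 1 (‖z‖ ^ γ₂)) ∧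
      (∀ y y', ‖fderiv ℝ (fun w =>
            ((Function.invFun (fun x => x + u s x) w + z)
              + u s (Function.invFun (fun x => x + u s x) w + z)) - w) y
          - fderiv ℝ (fun w =>
            ((Function.invFun (fun x => x + u s x) w + z)
              + u s (Function.invFun (fun x => x + u s x) w + z)) - w) y'‖
        ≤ C₁ * min 1 (‖z‖ ^ γ₂) * ‖y - y'‖ ^ γ₁) := by
  obtain ⟨hγ0, hγ1⟩ := hγ
  refine ⟨8, by norm_num, fun s z => ?_⟩
  have hγ₂γ : γ₂ ≤ γ := by linarith
  have hm0 : (0:ℝ) ≤ min 1 (‖z‖ ^ γ) :=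
    le_min zero_le_one (Real.rpow_nonneg (norm_nonneg _) _)
  have hm₂0 : (0:ℝ) ≤ min 1 (‖z‖ ^ γ₂) :=
    le_min zero_le_one (Real.rpow_nonneg (norm_nonneg _) _)
  have hkey : min 1 (‖z‖ ^ γ) ≤ min 1 (‖z‖ ^ γ₂) :=
    aux_min_exp (norm_nonneg z) hγ0 hγ₂ hγ₂γ
  constructor
  · intro y
    rw [aux_g_fderiv (hu s) (hgrad s) z y]
    have h := aux_D_norm (hgrad s) (hhold s) (invFun (fun x => x + u s x) y) z
    linarith
  · intro y y'
    rw [aux_g_fderiv (hu s) (hgrad s) z y, aux_g_fderiv (hu s) (hgrad s) z y']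
    set x := invFun (fun x => x + u s x) y with hx
    set x' := invFun (fun x => x + u s x) y' with hx'
    set D := (auxUnit (hgrad s) (x + z)).val.comp
        (((auxUnit (hgrad s) x)⁻¹ : (EuclideanSpace ℝ (Fin d) →L[ℝ] EuclideanSpace ℝ (Fin d))ˣ).val)
        - ContinuousLinearMap.id ℝ (EuclideanSpace ℝ (Fin d)) with hD
    set D' := (auxUnit (hgrad s) (x' + z)).val.comp
        (((auxUnit (hgrad s) x')⁻¹ : (EuclideanSpace ℝ (Fin d) →L[ℝ] EuclideanSpace ℝ (Fin d))ˣ).val)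
        - ContinuousLinearMap.id ℝ (EuclideanSpace ℝ (Fin d)) with hD'
    set r := ‖y - y'‖ with hr
    have hr0 : (0:ℝ) ≤ r := norm_nonneg _
    have hrγ0 : (0:ℝ) ≤ r ^ γ := Real.rpow_nonneg hr0 _
    have hrγ₁0 : (0:ℝ) ≤ r ^ γ₁ := Real.rpow_nonneg hr0 _
    -- bound A : via sup norms
    have hA : ‖D - D'‖ ≤ 4 * min 1 (‖z‖ ^ γ) := by
      have h1 : ‖D‖ ≤ 2 * min 1 (‖z‖ ^ γ) := aux_D_norm (hgrad s) (hhold s) x z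
      have h2 : ‖D'‖ ≤ 2 * min 1 (‖z‖ ^ γ) := aux_D_norm (hgrad s) (hhold s) x' z
      have := norm_sub_le D D'
      linarith
    -- bound B : Hölder
    have hB : ‖D - D'‖ ≤ 8 * r ^ γ := by
      have h1 : ‖D - D'‖ ≤ 4 * ‖x - x'‖ ^ γ := aux_D_holder (hgrad s) (hhold s) x x' z
      have h2 : ‖x - x'‖ ≤ 2 * r := aux_invFun_lip (hu s) (hgrad s) y y'
      have h3 : ‖x - x'‖ ^ γ ≤ (2 * r) ^ γ :=
        Real.rpow_le_rpow (norm_nonneg _) h2 hγ0.le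
      have h4 : (2 * r) ^ γ = (2:ℝ) ^ γ * r ^ γ := Real.mul_rpow (by norm_num) hr0
      have h5 : (2:ℝ) ^ γ ≤ 2 := by
        calc (2:ℝ) ^ γ ≤ (2:ℝ) ^ (1:ℝ) :=
          Real.rpow_le_rpow_of_exponent_le (by norm_num) hγ1.le
        _ = 2 := Real.rpow_one 2
      have h6 : (0:ℝ) ≤ (2:ℝ) ^ γ := by positivity
      nlinarith
    -- interpolation
    set θ := γ₂ / γ with hθ
    have hθ0 : 0 ≤ θ := div_nonneg hγ₂ hγ0.le
    have hθ1 : θ ≤ 1 := by rw [hθ, div_le_one hγ0]; exact hγ₂γ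
    have hint := aux_interp (norm_nonneg (D - D')) (by positivity) (by positivity)
      hθ0 hθ1 hA hB
    have e1 : (4 * min 1 (‖z‖ ^ γ)) ^ θ = (4:ℝ) ^ θ * (min 1 (‖z‖ ^ γ)) ^ θ :=
      Real.mul_rpow (by norm_num) hm0
    have e2 : (8 * r ^ γ) ^ (1 - θ) = (8:ℝ) ^ (1 - θ) * (r ^ γ) ^ (1 - θ) :=
      Real.mul_rpow (by norm_num) hrγ0
    have e3 : (r ^ γ) ^ (1 - θ) = r ^ γ₁ := by
      rw [← Real.rpow_mul hr0]
      congr 1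
      rw [hθ]
      field_simp
      linarith
    have e4 : (4:ℝ) ^ θ ≤ (8:ℝ) ^ θ :=
      Real.rpow_le_rpow (by norm_num) (by norm_num) hθ0
    have e5 : (8:ℝ) ^ θ * (8:ℝ) ^ (1 - θ) = 8 := by
      rw [← Real.rpow_add (by norm_num : (0:ℝ) < 8)]
      norm_num
    have e6 : (min 1 (‖z‖ ^ γ)) ^ θ ≤ min 1 (‖z‖ ^ γ₂) :=
      aux_min_pow_exp (norm_nonneg z) hγ0 hγ₂ hγ₂γ
    have h8θ : (0:ℝ) ≤ (8:ℝ) ^ θ := by positivity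
    have h8θ' : (0:ℝ) ≤ (8:ℝ) ^ (1 - θ) := by positivity
    have h4θ : (0:ℝ) ≤ (4:ℝ) ^ θ := by positivity
    have hmθ : (0:ℝ) ≤ (min 1 (‖z‖ ^ γ)) ^ θ := by positivity
    calc ‖D - D'‖ ≤ (4 * min 1 (‖z‖ ^ γ)) ^ θ * (8 * r ^ γ) ^ (1 - θ) := hint
      _ = ((4:ℝ) ^ θ * (min 1 (‖z‖ ^ γ)) ^ θ) * ((8:ℝ) ^ (1 - θ) * r ^ γ₁) := by
          rw [e1, e2, e3]
      _ ≤ ((8:ℝ) ^ θ * min 1 (‖z‖ ^ γ₂)) * ((8:ℝ) ^ (1 - θ) * r ^ γ₁) := by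
          apply mul_le_mul (mul_le_mul e4 e6 hmθ h8θ) le_rfl (by positivity) (by positivity)
      _ = ((8:ℝ) ^ θ * (8:ℝ) ^ (1 - θ)) * min 1 (‖z‖ ^ γ₂) * r ^ γ₁ := by ring
      _ = 8 * min 1 (‖z‖ ^ γ₂) * r ^ γ₁ := by rw [e5]



open Set

/-- Lemma 3.2 (estimate (3.8)): in the setting of `g_s(y,z) := Φ_s(Φ_s⁻¹(y)+z) − y`,
for any `γ₁, γ₂ ≥ 0` with `γ₁ + γ₂ = γ ∈ (0,1)`, there is `C₁ = C₁(d,γ₁,γ₂)` such that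
`‖∇_y g_s(·,z)‖_{γ₁} ≤ C₁ (1 ∧ |z|^{γ₂})`, i.e. both the sup norm and the `γ₁`-Hölder
seminorm of `y ↦ ∇_y g_s(y,z)` are bounded by `C₁ (1 ∧ |z|^{γ₂})`. -/
theorem stmt14 (d : ℕ) (hd : 1 ≤ d) (γ γ₁ γ₂ : ℝ) (hγ : γ ∈ Ioo (0:ℝ) 1)
    (hγ₁ : 0 ≤ γ₁) (hγ₂ : 0 ≤ γ₂) (hsum : γ₁ + γ₂ = γ)
    (u : ℝ → EuclideanSpace ℝ (Fin d) → EuclideanSpace ℝ (Fin d))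
    (hu : ∀ s, ContDiff ℝ 1 (u s))
    (hgrad : ∀ s x, ‖fderiv ℝ (u s) x‖ ≤ 1 / 2)
    (hhold : ∀ s x y, ‖fderiv ℝ (u s) x - fderiv ℝ (u s) y‖ ≤ (1 / 2) * ‖x - y‖ ^ γ) :
    ∃ C₁ > (0:ℝ), ∀ (s : ℝ) (z : EuclideanSpace ℝ (Fin d)),
      (∀ y, ‖fderiv ℝ (fun y' =>
          ((Function.invFun (fun x => x + u s x) y' + z)
            + u s (Function.invFun (fun x => x + u s x) y' + z)) - y') y‖
        ≤ C₁ * min 1 (‖z‖ ^ γ₂)) ∧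
      (∀ y y', ‖fderiv ℝ (fun w =>
            ((Function.invFun (fun x => x + u s x) w + z)
              + u s (Function.invFun (fun x => x + u s x) w + z)) - w) y
          - fderiv ℝ (fun w =>
            ((Function.invFun (fun x => x + u s x) w + z)
              + u s (Function.invFun (fun x => x + u s x) w + z)) - w) y'‖
        ≤ C₁ * min 1 (‖z‖ ^ γ₂) * ‖y - y'‖ ^ γ₁) := by
  exact stmt14' d hd γ γ₁ γ₂ hγ hγ₁ hγ₂ hsum u hu hgrad hhold
end
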